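/- With the notation of the orthonormal basis φ_{ar} = (1/δ) Σ_j e_{aj}ρ^{-1} ⊗ V_r e_{j1} in M_n ⊗_ψ M_n, where x ∈ M_n acts on the left on the first tensor factor, one has Σ_{a,r} ⟨φ_{ar}, x·φ_{ar}⟩ = Tr(x) · e_{11} · dim span{V_r}. Consequently, applying the normalized trace τ = Tr/n gives Σ_{a,r} τ(⟨φ_{ar}, x·φ_{ar}⟩) = τ(x) · dim span{V_r}. -/

import Mathlib

open scoped TensorProduct ComplexOrder
open Matrix

/-- The state `ψ = Tr(ρ ·)` on `M_n` as a linear functional. -/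
noncomputable def psi1 {n : ℕ} (ρ : Matrix (Fin n) (Fin n) ℂ) :
    Matrix (Fin n) (Fin n) ℂ →ₗ[ℂ] ℂ where
  toFun X := (ρ * X).trace
  map_add' x y := by simp [mul_add]
  map_smul' c x := by simp [mul_smul_comm]


/-- with `φ_{ar} = (1/δ) Σ_j e_{aj}ρ⁻¹ ⊗ V_r e_{j1}` in `M_n ⊗_ψ M_n`
(`ψ = Tr(ρ·)`, `ρ` positive invertible diagonal with `Tr(ρ⁻¹) = δ²`, and
`Tr(ρ⁻¹ V_r* V_q) = δ² δ_{rq}`), and `x ∈ M_n` acting on the left of the first tensor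
factor, one has `Σ_{a,r} ⟨φ_{ar}, x·φ_{ar}⟩ = Tr(x) · e_{11} · dim span{V_r}` (the inner
products being written out sesquilinearly as double sums); applying the normalized trace
`τ = Tr/n` gives `Σ_{a,r} τ(⟨φ_{ar}, x·φ_{ar}⟩) = τ(x) · dim span{V_r}`. -/
theorem stmt13 {n m : ℕ} (hn : 0 < n) (c : Fin n → ℝ) (hc : ∀ i, 0 < c i)
    (ρ : Matrix (Fin n) (Fin n) ℂ) (hρ : ρ = Matrix.diagonal (fun i => (c i : ℂ)))
    (δ : ℝ) (hδ : 0 < δ) (hform : (ρ⁻¹).trace = (δ ^ 2 : ℂ))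
    (V : Fin m → Matrix (Fin n) (Fin n) ℂ)
    (horth : ∀ r q, (ρ⁻¹ * (V r)ᴴ * V q).trace = if r = q then (δ ^ 2 : ℂ) else 0)
    (x : Matrix (Fin n) (Fin n) ℂ) :
    (∑ a, ∑ r : Fin m, ∑ j, ∑ k,
      psi1 ρ (((1 / (δ : ℂ)) • (single a j (1 : ℂ) * ρ⁻¹))ᴴ *
          ((1 / (δ : ℂ)) • (x * single a k (1 : ℂ) * ρ⁻¹))) •
        ((V r * single j (⟨0, hn⟩ : Fin n) (1 : ℂ))ᴴ *
          (V r * single k (⟨0, hn⟩ : Fin n) (1 : ℂ)))) =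
      (x.trace * (Module.finrank ℂ (Submodule.span ℂ (Set.range V)) : ℂ)) •
        single (⟨0, hn⟩ : Fin n) (⟨0, hn⟩ : Fin n) (1 : ℂ) ∧
    (∑ a, ∑ r : Fin m, ((n : ℂ))⁻¹ * (∑ j, ∑ k,
      psi1 ρ (((1 / (δ : ℂ)) • (single a j (1 : ℂ) * ρ⁻¹))ᴴ *
          ((1 / (δ : ℂ)) • (x * single a k (1 : ℂ) * ρ⁻¹))) •
        ((V r * single j (⟨0, hn⟩ : Fin n) (1 : ℂ))ᴴ *
          (V r * single k (⟨0, hn⟩ : Fin n) (1 : ℂ)))).trace) =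
      (((n : ℂ))⁻¹ * x.trace) * (Module.finrank ℂ (Submodule.span ℂ (Set.range V)) : ℂ) := by
  subst hρ
  have hδ' : (δ : ℂ) ≠ 0 := by exact_mod_cast hδ.ne'
  have hδsq : ((δ : ℂ) ^ 2) ≠ 0 := pow_ne_zero 2 hδ'
  have hcne : ∀ i, (c i : ℂ) ≠ 0 := fun i => by exact_mod_cast (hc i).ne'
  have hρinv : (Matrix.diagonal (fun i => (c i : ℂ)))⁻¹
      = Matrix.diagonal (fun i => ((c i : ℂ))⁻¹) := by
    apply Matrix.inv_eq_right_inv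
    rw [Matrix.diagonal_mul_diagonal,
      show (fun i => (c i : ℂ) * ((c i : ℂ))⁻¹) = fun _ => 1 from
        funext fun i => mul_inv_cancel₀ (hcne i)]
    exact Matrix.diagonal_one
  -- key scalar computation
  have key : ∀ (a j k : Fin n),
      psi1 (Matrix.diagonal (fun i => (c i : ℂ)))
        (((1 / (δ : ℂ)) • (single a j (1 : ℂ) *
            (Matrix.diagonal (fun i => (c i : ℂ)))⁻¹))ᴴ *
         ((1 / (δ : ℂ)) • (x * single a k (1 : ℂ) *
            (Matrix.diagonal (fun i => (c i : ℂ)))⁻¹))) =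
      ((δ : ℂ) ^ 2)⁻¹ * (if j = k then ((c j : ℂ))⁻¹ * x a a else 0) := by
    intro a j k
    rw [hρinv]
    simp only [psi1, LinearMap.coe_mk, AddHom.coe_mk, Matrix.smul_mul, Matrix.mul_smul,
      Matrix.conjTranspose_smul, Matrix.trace_smul, smul_smul, smul_eq_mul]
    rw [Matrix.conjTranspose_mul, Matrix.diagonal_conjTranspose]
    simp only [Matrix.trace, Matrix.diag, Matrix.mul_apply, Matrix.diagonal_apply,
      Matrix.single, Matrix.conjTranspose_apply, Matrix.of_apply, ite_and, ite_mul,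
      mul_ite, mul_zero, zero_mul, star_zero, star_one, Finset.sum_ite_eq, Finset.sum_ite_eq',
      Finset.mem_univ, if_true, one_mul, mul_one, Pi.star_apply, RCLike.star_def, map_inv₀,
      Complex.conj_ofReal]
    simp only [apply_ite (starRingEnd ℂ), _root_.map_one, _root_.map_zero, ite_mul, zero_mul,
      one_mul, mul_ite, mul_zero, Finset.sum_ite_eq, Finset.sum_ite_eq', Finset.mem_univ, if_true]
    rcases eq_or_ne j k with h | h
    · subst h
      simp [Complex.conj_ofReal, mul_comm, mul_assoc, mul_left_comm]
      left
      field_simp [hcne j]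
    · simp [h, Ne.symm h]
  -- matrix part
  have mpart : ∀ (r : Fin m) (j k : Fin n),
      (V r * single j (⟨0, hn⟩ : Fin n) (1 : ℂ))ᴴ *
        (V r * single k (⟨0, hn⟩ : Fin n) (1 : ℂ)) =
      (((V r)ᴴ * V r) j k) •
        single (⟨0, hn⟩ : Fin n) (⟨0, hn⟩ : Fin n) (1 : ℂ) := by
    intro r j k
    ext p q
    simp [Matrix.mul_apply, Matrix.conjTranspose_apply, Matrix.single, ite_and, mul_ite,
      ite_mul, mul_zero, zero_mul, apply_ite (starRingEnd ℂ), Finset.sum_ite_eq,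
      Finset.sum_ite_eq', Finset.mul_sum, Finset.sum_mul, eq_comm, mul_comm]
  -- orthonormality in diagonal form
  have htr : ∀ r : Fin m,
      ∑ j, ((c j : ℂ))⁻¹ * ((V r)ᴴ * V r) j j = (δ : ℂ) ^ 2 := by
    intro r
    have h := horth r r
    rw [if_pos rfl, hρinv] at h
    rw [← h]
    simp [Matrix.trace, Matrix.diag, Matrix.mul_apply, Matrix.diagonal_apply, Finset.sum_mul,
      ite_mul, zero_mul, Finset.sum_ite_eq, Finset.mem_univ, Finset.mul_sum, mul_assoc]
  -- linear independence and rank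
  have hLI : LinearIndependent ℂ V := by
    rw [linearIndependent_iff']
    intro s g hsum q hq
    have h0 : ((Matrix.diagonal (fun i => (c i : ℂ)))⁻¹ * (V q)ᴴ *
        (∑ r ∈ s, g r • V r)).trace = 0 := by rw [hsum]; simp
    rw [Finset.mul_sum] at h0
    simp only [Matrix.mul_smul, Matrix.trace_smul, smul_eq_mul, Matrix.trace_sum] at h0
    rw [Finset.sum_congr rfl (fun r _ => by rw [horth q r])] at h0
    simp only [mul_ite, mul_zero] at h0
    rw [Finset.sum_ite_eq s q (fun r => g r * (δ:ℂ)^2), if_pos hq] at h0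
    exact (mul_eq_zero.mp h0).resolve_right hδsq
  have hfr : ((Module.finrank ℂ (Submodule.span ℂ (Set.range V))) : ℂ) = (m : ℂ) := by
    rw [finrank_span_eq_card hLI, Fintype.card_fin]
  -- scalar sum
  have h1 : ∀ (a : Fin n) (r : Fin m),
      ∑ j, ∑ k, (((δ : ℂ) ^ 2)⁻¹ * (if j = k then ((c j : ℂ))⁻¹ * x a a else 0)) *
        ((V r)ᴴ * V r) j k = x a a := by
    intro a r
    simp only [mul_ite, mul_zero, ite_mul, zero_mul, Finset.sum_ite_eq, Finset.mem_univ, if_true]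
    calc ∑ j, ((δ : ℂ) ^ 2)⁻¹ * (((c j : ℂ))⁻¹ * x a a) * ((V r)ᴴ * V r) j j
        = ((δ : ℂ) ^ 2)⁻¹ * x a a * ∑ j, ((c j : ℂ))⁻¹ * ((V r)ᴴ * V r) j j := by
          rw [Finset.mul_sum]; exact Finset.sum_congr rfl fun j _ => by ring
      _ = x a a := by rw [htr r]; field_simp
  -- main identity
  have main : (∑ a, ∑ r : Fin m, ∑ j, ∑ k,
      psi1 (Matrix.diagonal fun i => (c i : ℂ))
        (((1 / (δ : ℂ)) • (single a j (1 : ℂ) *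
            (Matrix.diagonal fun i => (c i : ℂ))⁻¹))ᴴ *
          ((1 / (δ : ℂ)) • (x * single a k (1 : ℂ) *
            (Matrix.diagonal fun i => (c i : ℂ))⁻¹))) •
        ((V r * single j (⟨0, hn⟩ : Fin n) (1 : ℂ))ᴴ *
          (V r * single k (⟨0, hn⟩ : Fin n) (1 : ℂ)))) =
      (x.trace * (m : ℂ)) •
        single (⟨0, hn⟩ : Fin n) (⟨0, hn⟩ : Fin n) (1 : ℂ) := by
    simp only [key, mpart, smul_smul]
    simp only [← Finset.sum_smul]
    congr 1
    rw [Finset.sum_congr rfl fun a _ => Finset.sum_congr rfl fun r _ => h1 a r]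
    simp only [Finset.sum_const, Finset.card_univ, Fintype.card_fin, nsmul_eq_mul]
    rw [← Finset.mul_sum, Matrix.trace, mul_comm]
    rfl
  constructor
  · rw [hfr]; exact main
  · simp only [← Finset.mul_sum, Matrix.trace_sum, Matrix.trace_smul, smul_eq_mul]
    have e1 := congrArg Matrix.trace main
    simp only [Matrix.trace_sum, Matrix.trace_smul, smul_eq_mul] at e1
    rw [e1, hfr]
    have htrE : (single (⟨0, hn⟩ : Fin n) (⟨0, hn⟩ : Fin n) (1 : ℂ)).trace = 1 := by
      simp [Matrix.trace, Matrix.diag, Matrix.single]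
    rw [htrE]
    ring
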